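/- (Example 1, Condition 4 for the exponential kernel.) In the perturbed-grid setting with grid enumeration, the identifiability condition holds for the exponential kernel: for every α > 0, liminf_{n→∞} inf_{θ = (θ₁,θ₂) ∈ Θ, ‖θ−θ₀‖≥α} (1/n) Σ_{i,j=1}^n (θ₁ e^{−θ₂ g_{ij}} − θ₁⁰ e^{−θ₂⁰ g_{ij}})² > 0, where g_{ij} := ‖f_i − f_j‖. -/

import Mathlib

open Filter
open scoped Topology

/-- The perturbed-grid input
`f_i = Σ_{k=1}^{d₀} ((x_i)_k + δ ξ_{i,k}) e_k + Σ_{k>d₀} ξ_{i,k} s_k e_k`. -/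
noncomputable def perturbedGridInput {H : Type*} [NormedAddCommGroup H]
    [InnerProductSpace ℝ H] [CompleteSpace H] (e : HilbertBasis ℕ ℝ H)
    (d₀ : ℕ) (δ : ℝ) (ξ : ℕ → ℕ → ℝ) (s : ℕ → ℝ) (x : ℕ → ℕ → ℕ) (i : ℕ) : H :=
  (∑ k ∈ Finset.range d₀, (((x i k : ℝ)) + δ * ξ i k) • e k)
    + ∑' k : ℕ, (ξ i (d₀ + k) * s (d₀ + k)) • e (d₀ + k)

section Aux

variable {H : Type*} [NormedAddCommGroup H] [InnerProductSpace ℝ H] [CompleteSpace H]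
  (e : HilbertBasis ℕ ℝ H) (d₀ : ℕ)

omit [CompleteSpace H] in
lemma pgi_tail_orthonormal : Orthonormal ℝ (fun k : ℕ => e (d₀ + k)) :=
  e.orthonormal.comp _ (fun a b h => by omega)

lemma pgi_tail_summable (c : ℕ → ℝ) (hc : Summable fun k => (c k) ^ 2) :
    Summable (fun k : ℕ => c k • e (d₀ + k)) := by
  have h := ((pgi_tail_orthonormal e d₀).orthogonalFamily).summable_iff_norm_sq_summable c
  rw [show (fun k : ℕ => c k • e (d₀ + k)) =
    (fun k : ℕ => (LinearIsometry.toSpanSingleton ℝ H ((pgi_tail_orthonormal e d₀).1 k)) (c k)) from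
    funext fun k => (LinearIsometry.toSpanSingleton_apply _ _).symm]
  rw [h]
  simpa [Real.norm_eq_abs, sq_abs] using hc

lemma pgi_tail_norm_sq_le (c : ℕ → ℝ) (hc : Summable fun k => (c k) ^ 2) (T : ℝ)
    (hT : ∀ F : Finset ℕ, ∑ k ∈ F, (c k)^2 ≤ T) :
    ‖∑' k : ℕ, c k • e (d₀ + k)‖ ^ 2 ≤ T := by
  have hs := pgi_tail_summable e d₀ c hc
  have hhs := hs.hasSum
  have htend : Tendsto (fun F : Finset ℕ => ‖∑ k ∈ F, c k • e (d₀ + k)‖ ^ 2) atTop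
      (nhds (‖∑' k : ℕ, c k • e (d₀ + k)‖ ^ 2)) :=
    ((continuous_norm.tendsto _).comp hhs).pow 2
  refine le_of_tendsto htend (Eventually.of_forall fun F => ?_)
  have := ((pgi_tail_orthonormal e d₀).orthogonalFamily).norm_sum c F
  simp only [LinearIsometry.toSpanSingleton_apply] at this
  rw [this]
  simpa [Real.norm_eq_abs, sq_abs] using hT F

lemma pgi_inner_tail_eq_zero (c : ℕ → ℝ) (hc : Summable fun k => (c k) ^ 2)
    {k : ℕ} (hk : k < d₀) :
    inner ℝ (e k) (∑' j : ℕ, c j • e (d₀ + j)) = (0 : ℝ) := by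
  have hs := (pgi_tail_summable e d₀ c hc).hasSum
  have h2 : HasSum (fun j : ℕ => (inner ℝ (e k) (c j • e (d₀ + j)) : ℝ))
      (inner ℝ (e k) (∑' j : ℕ, c j • e (d₀ + j))) := (innerSL ℝ (e k)).hasSum hs
  have h3 : (fun j : ℕ => (inner ℝ (e k) (c j • e (d₀ + j)) : ℝ)) = fun _ => 0 := by
    funext j
    rw [real_inner_smul_right]
    have : (k : ℕ) ≠ d₀ + j := by omega
    rw [e.orthonormal.2 this, mul_zero]
  rw [h3] at h2
  exact (hasSum_zero.unique h2).symm

variable (δ : ℝ) (hδ0 : 0 ≤ δ) (hδ : δ < 1/2) (ξ : ℕ → ℕ → ℝ) (hξ : ∀ i k, |ξ i k| ≤ 1)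
  (s : ℕ → ℝ) (hssum : Summable fun k : ℕ => s (d₀ + k) ^ 2) (x : ℕ → ℕ → ℕ)

omit [NormedAddCommGroup H] in
include hξ hssum in
lemma pgi_coeff_summable (i : ℕ) :
    Summable fun k : ℕ => (ξ i (d₀ + k) * s (d₀ + k)) ^ 2 := by
  refine Summable.of_nonneg_of_le (fun k => sq_nonneg _) (fun k => ?_) hssum
  rw [mul_pow]
  have h1 : (ξ i (d₀ + k))^2 ≤ 1 := by
    nlinarith [hξ i (d₀+k), abs_nonneg (ξ i (d₀+k)), sq_abs (ξ i (d₀+k))]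
  nlinarith [sq_nonneg (s (d₀ + k))]

include hξ hssum in
lemma pgi_inner {k : ℕ} (hk : k < d₀) (i : ℕ) :
    inner ℝ (e k) (perturbedGridInput e d₀ δ ξ s x i) = ((x i k : ℝ)) + δ * ξ i k := by
  rw [perturbedGridInput, inner_add_right, pgi_inner_tail_eq_zero e d₀ _
    (pgi_coeff_summable d₀ ξ hξ s hssum i) hk, add_zero, inner_sum]
  have : ∀ l ∈ Finset.range d₀, (inner ℝ (e k) ((((x i l : ℝ)) + δ * ξ i l) • e l) : ℝ)
      = if l = k then ((x i l : ℝ)) + δ * ξ i l else 0 := by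
    intro l _
    rw [real_inner_smul_right]
    rcases eq_or_ne l k with rfl | h
    · rw [real_inner_self_eq_norm_sq, e.orthonormal.1 l, if_pos rfl]; ring
    · rw [e.orthonormal.2 (Ne.symm h), mul_zero, if_neg h]
  rw [Finset.sum_congr rfl this, Finset.sum_ite_eq' (Finset.range d₀) k]
  simp [Finset.mem_range.mpr hk]

include hδ0 hδ hξ hssum in
lemma pgi_lower {i j k : ℕ} (hk : k < d₀) (hne : x i k ≠ x j k) :
    1 - 2*δ ≤ ‖perturbedGridInput e d₀ δ ξ s x i - perturbedGridInput e d₀ δ ξ s x j‖ := by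
  have h1 : (inner ℝ (e k) (perturbedGridInput e d₀ δ ξ s x i - perturbedGridInput e d₀ δ ξ s x j) : ℝ)
      = ((x i k : ℝ) - (x j k : ℝ)) + δ * (ξ i k - ξ j k) := by
    rw [inner_sub_right, pgi_inner e d₀ δ ξ hξ s hssum x hk i,
      pgi_inner e d₀ δ ξ hξ s hssum x hk j]; ring
  have h2 : |(inner ℝ (e k) (perturbedGridInput e d₀ δ ξ s x i - perturbedGridInput e d₀ δ ξ s x j) : ℝ)|
      ≤ ‖perturbedGridInput e d₀ δ ξ s x i - perturbedGridInput e d₀ δ ξ s x j‖ := by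
    have := abs_real_inner_le_norm (e k) (perturbedGridInput e d₀ δ ξ s x i - perturbedGridInput e d₀ δ ξ s x j)
    rwa [e.orthonormal.1 k, one_mul] at this
  have h3 : (1 : ℝ) ≤ |(x i k : ℝ) - (x j k : ℝ)| := by
    have h : (1:ℤ) ≤ |(x i k : ℤ) - (x j k : ℤ)| := by
      have hne' : ((x i k : ℤ) - (x j k : ℤ)) ≠ 0 := by omega
      rcases hne'.lt_or_gt with h | h
      · rw [abs_of_neg h]; omega
      · rw [abs_of_pos h]; omega
    rw [show ((x i k : ℝ) - (x j k : ℝ)) = (((x i k : ℤ) - (x j k : ℤ) : ℤ) : ℝ) by push_cast; ring,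
      ← Int.cast_abs]
    exact_mod_cast h
  have h4 : |δ * (ξ i k - ξ j k)| ≤ 2*δ := by
    rw [abs_mul, abs_of_nonneg hδ0]
    have : |ξ i k - ξ j k| ≤ 2 := by
      calc |ξ i k - ξ j k| ≤ |ξ i k| + |ξ j k| := abs_sub _ _
        _ ≤ 2 := by linarith [hξ i k, hξ j k]
    nlinarith
  calc 1 - 2*δ ≤ |(x i k : ℝ) - (x j k : ℝ)| - |δ * (ξ i k - ξ j k)| := by linarith
    _ ≤ |((x i k : ℝ) - (x j k : ℝ)) + δ * (ξ i k - ξ j k)| := by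
        have := abs_add_le (((x i k : ℝ) - (x j k : ℝ)) + δ * (ξ i k - ξ j k)) (-(δ * (ξ i k - ξ j k)))
        simp only [add_neg_cancel_right, abs_neg] at this; linarith
    _ ≤ _ := h1 ▸ h2

include hξ hssum in
lemma pgi_tail_norm_le (i : ℕ) :
    ‖∑' k : ℕ, (ξ i (d₀ + k) * s (d₀ + k)) • e (d₀ + k)‖
      ≤ Real.sqrt (∑' k : ℕ, s (d₀ + k) ^ 2) := by
  have hb : ∀ k, (ξ i (d₀ + k) * s (d₀ + k)) ^ 2 ≤ s (d₀ + k) ^ 2 := by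
    intro k
    have h1 : (ξ i (d₀ + k))^2 ≤ 1 := by
      nlinarith [hξ i (d₀+k), abs_nonneg (ξ i (d₀+k)), sq_abs (ξ i (d₀+k))]
    rw [mul_pow]; nlinarith [sq_nonneg (s (d₀ + k))]
  have hsq : ‖∑' k : ℕ, (ξ i (d₀ + k) * s (d₀ + k)) • e (d₀ + k)‖ ^ 2
      ≤ ∑' k : ℕ, s (d₀ + k) ^ 2 := by
    refine pgi_tail_norm_sq_le e d₀ _ (pgi_coeff_summable d₀ ξ hξ s hssum i) _ (fun F => ?_)
    calc ∑ k ∈ F, (ξ i (d₀ + k) * s (d₀ + k))^2 ≤ ∑ k ∈ F, s (d₀ + k)^2 :=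
          Finset.sum_le_sum (fun k _ => hb k)
      _ ≤ ∑' k : ℕ, s (d₀ + k) ^ 2 := Summable.sum_le_tsum F (fun k _ => sq_nonneg _) hssum
  have := Real.sqrt_le_sqrt hsq
  rwa [Real.sqrt_sq (norm_nonneg _)] at this

include hδ0 hδ hξ hssum in
lemma pgi_upper {i j : ℕ}
    (hadj : ∀ k, k < d₀ → |(x i k : ℝ) - (x j k : ℝ)| ≤ 1) :
    ‖perturbedGridInput e d₀ δ ξ s x i - perturbedGridInput e d₀ δ ξ s x j‖
      ≤ 2*(d₀ : ℝ) + 2*Real.sqrt (∑' k : ℕ, s (d₀ + k) ^ 2) := by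
  set Ti := ∑' k : ℕ, (ξ i (d₀ + k) * s (d₀ + k)) • e (d₀ + k) with hTi
  set Tj := ∑' k : ℕ, (ξ j (d₀ + k) * s (d₀ + k)) • e (d₀ + k) with hTj
  have hsplit : perturbedGridInput e d₀ δ ξ s x i - perturbedGridInput e d₀ δ ξ s x j
      = (∑ k ∈ Finset.range d₀,
          ((((x i k : ℝ)) + δ * ξ i k) - (((x j k : ℝ)) + δ * ξ j k)) • e k) + (Ti - Tj) := by
    simp only [perturbedGridInput, sub_smul]
    rw [Finset.sum_sub_distrib]
    abel
  rw [hsplit]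
  have h1 : ‖∑ k ∈ Finset.range d₀,
      ((((x i k : ℝ)) + δ * ξ i k) - (((x j k : ℝ)) + δ * ξ j k)) • e k‖ ≤ 2*(d₀ : ℝ) := by
    calc _ ≤ ∑ k ∈ Finset.range d₀,
        ‖((((x i k : ℝ)) + δ * ξ i k) - (((x j k : ℝ)) + δ * ξ j k)) • e k‖ :=
          norm_sum_le _ _
      _ ≤ ∑ _k ∈ Finset.range d₀, (2:ℝ) := by
          refine Finset.sum_le_sum (fun k hk => ?_)
          rw [norm_smul, e.orthonormal.1 k, mul_one, Real.norm_eq_abs]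
          have h2 : |(x i k : ℝ) - (x j k : ℝ)| ≤ 1 := hadj k (Finset.mem_range.mp hk)
          have h3 : |δ * (ξ i k - ξ j k)| ≤ 2*δ := by
            rw [abs_mul, abs_of_nonneg hδ0]
            have : |ξ i k - ξ j k| ≤ 2 := by
              calc |ξ i k - ξ j k| ≤ |ξ i k| + |ξ j k| := abs_sub _ _
                _ ≤ 2 := by linarith [hξ i k, hξ j k]
            nlinarith
          calc |(((x i k : ℝ)) + δ * ξ i k) - (((x j k : ℝ)) + δ * ξ j k)|
              = |((x i k : ℝ) - (x j k : ℝ)) + δ * (ξ i k - ξ j k)| := by ring_nf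
            _ ≤ |(x i k : ℝ) - (x j k : ℝ)| + |δ * (ξ i k - ξ j k)| := abs_add_le _ _
            _ ≤ 1 + 2*δ := by linarith
            _ ≤ 2 := by linarith
      _ = 2*(d₀:ℝ) := by rw [Finset.sum_const, Finset.card_range]; ring
  have h2 : ‖Ti - Tj‖ ≤ 2*Real.sqrt (∑' k : ℕ, s (d₀ + k) ^ 2) := by
    calc ‖Ti - Tj‖ ≤ ‖Ti‖ + ‖Tj‖ := norm_sub_le _ _
      _ ≤ _ := by
          have := pgi_tail_norm_le e d₀ ξ hξ s hssum i
          have := pgi_tail_norm_le e d₀ ξ hξ s hssum j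
          rw [← hTi, ← hTj] at *
          linarith
  calc ‖_ + (Ti - Tj)‖ ≤ _ + ‖Ti - Tj‖ := norm_add_le _ _
    _ ≤ _ := by linarith

end Aux

lemma pgi_exists_beta (Θ : Set (ℝ × ℝ)) (hΘcomp : IsCompact Θ)
    (hΘpos : Θ ⊆ Set.Ioi (0 : ℝ) ×ˢ Set.Ioi (0 : ℝ))
    (θ₀ : ℝ × ℝ) (hθ₀ : θ₀ ∈ Θ) (α : ℝ) (hα : 0 < α)
    (c C : ℝ) (hc : 0 < c) (hcC : c ≤ C) :
    ∃ β' > (0:ℝ), ∀ θ ∈ Θ, α ≤ dist θ θ₀ → ∀ g ∈ Set.Icc c C,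
      β' ≤ (θ.1 - θ₀.1)^2 + (θ.1 * Real.exp (-θ.2 * g) - θ₀.1 * Real.exp (-θ₀.2 * g))^2 := by
  classical
  set Θα : Set (ℝ × ℝ) := Θ ∩ {θ | α ≤ dist θ θ₀} with hΘα
  rcases Set.eq_empty_or_nonempty Θα with hemp | hne
  · refine ⟨1, one_pos, fun θ hθ hdist g _ => ?_⟩
    exact absurd (Set.mem_inter hθ hdist) (hemp ▸ Set.notMem_empty θ)
  · set K : Set ((ℝ × ℝ) × ℝ) := Θα ×ˢ Set.Icc c C with hK
    have hKcomp : IsCompact K :=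
      (hΘcomp.inter_right (isClosed_le continuous_const (continuous_id.dist continuous_const))).prod
        isCompact_Icc
    have hKne : K.Nonempty := hne.prod (Set.nonempty_Icc.mpr hcC)
    set F : (ℝ × ℝ) × ℝ → ℝ := fun p =>
      (p.1.1 - θ₀.1)^2 + (p.1.1 * Real.exp (-p.1.2 * p.2) - θ₀.1 * Real.exp (-θ₀.2 * p.2))^2
      with hF
    have hcont : ContinuousOn F K := by
      apply Continuous.continuousOn
      fun_prop
    obtain ⟨p, hpK, hpmin⟩ := hKcomp.exists_isMinOn hKne hcont
    refine ⟨F p, ?_, fun θ hθ hdist g hg => hpmin (Set.mk_mem_prod ⟨hθ, hdist⟩ hg)⟩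
    rcases lt_or_ge 0 (F p) with h | h
    · exact h
    · exfalso
      have h' : (p.1.1 - θ₀.1)^2 +
          (p.1.1 * Real.exp (-p.1.2 * p.2) - θ₀.1 * Real.exp (-θ₀.2 * p.2))^2 ≤ 0 := by
        simpa [hF] using h
      have h1 : (p.1.1 - θ₀.1)^2 = 0 ∧
          (p.1.1 * Real.exp (-p.1.2 * p.2) - θ₀.1 * Real.exp (-θ₀.2 * p.2))^2 = 0 := by
        constructor <;> nlinarith [sq_nonneg (p.1.1 - θ₀.1),
          sq_nonneg (p.1.1 * Real.exp (-p.1.2 * p.2) - θ₀.1 * Real.exp (-θ₀.2 * p.2))]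
      have h11 : p.1.1 = θ₀.1 := by nlinarith [h1.1]
      have hθ₀1 : 0 < θ₀.1 := (hΘpos hθ₀).1
      have hexp : Real.exp (-p.1.2 * p.2) = Real.exp (-θ₀.2 * p.2) := by
        have h2 : p.1.1 * Real.exp (-p.1.2 * p.2) = θ₀.1 * Real.exp (-θ₀.2 * p.2) := by
          nlinarith [h1.2]
        rw [h11] at h2
        exact mul_left_cancel₀ (ne_of_gt hθ₀1) h2
      have hg : c ≤ p.2 := hpK.2.1
      have hp2 : p.1.2 = θ₀.2 := by
        have := Real.exp_injective hexp
        have hgpos : 0 < p.2 := lt_of_lt_of_le hc hg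
        have h' := mul_right_cancel₀ (ne_of_gt hgpos) this
        linarith
      have hdist : α ≤ dist p.1 θ₀ := hpK.1.2
      have : p.1 = θ₀ := Prod.ext h11 hp2
      rw [this, dist_self] at hdist
      linarith

lemma pgi_counting_lemma (d₀ : ℕ) (hd₀ : 1 ≤ d₀) (x : ℕ → ℕ → ℕ)
    (hgrid : ∀ m : ℕ, 1 ≤ m →
      Finset.image (fun i => fun k : Fin d₀ => x i (k : ℕ)) (Finset.range (m ^ d₀))
        = Fintype.piFinset fun _ : Fin d₀ => Finset.Icc 1 m)
    (m : ℕ) (hm : 2 ≤ m) :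
    ∃ S : Finset (ℕ × ℕ), S ⊆ Finset.range (m^d₀) ×ˢ Finset.range (m^d₀) ∧
      S.card = (m-1) * m^(d₀-1) ∧
      ∀ p ∈ S, p.1 ≠ p.2 ∧ x p.1 0 ≠ x p.2 0 ∧
        ∀ k, k < d₀ → x p.1 k ≤ x p.2 k + 1 ∧ x p.2 k ≤ x p.1 k + 1 := by
  classical
  have hm1 : 1 ≤ m := le_trans one_le_two hm
  set X : ℕ → (Fin d₀ → ℕ) := fun i => fun k : Fin d₀ => x i (k : ℕ) with hX
  have hg := hgrid m hm1
  set grid : Finset (Fin d₀ → ℕ) := Fintype.piFinset fun _ : Fin d₀ => Finset.Icc 1 m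
  have hcardgrid : grid.card = m ^ d₀ := by
    rw [Fintype.card_piFinset]
    simp [Nat.card_Icc]
  have hinj : Set.InjOn X (Finset.range (m^d₀)) := by
    apply Finset.injOn_of_card_image_eq
    rw [hg, hcardgrid, Finset.card_range]
  have hex : ∀ v ∈ grid, ∃ i, i ∈ Finset.range (m^d₀) ∧ X i = v := by
    intro v hv
    rw [← hg] at hv
    obtain ⟨i, hi, hXi⟩ := Finset.mem_image.mp hv
    exact ⟨i, hi, hXi⟩
  set ι : (Fin d₀ → ℕ) → ℕ := fun v =>
    if h : ∃ i, i ∈ Finset.range (m^d₀) ∧ X i = v then h.choose else 0 with hι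
  have hιspec : ∀ v ∈ grid, ι v ∈ Finset.range (m^d₀) ∧ X (ι v) = v := by
    intro v hv
    have h := hex v hv
    simp only [hι, dif_pos h]
    exact h.choose_spec
  set z : Fin d₀ := ⟨0, hd₀⟩ with hz
  set L : Finset (Fin d₀ → ℕ) :=
    Fintype.piFinset (fun k : Fin d₀ => Finset.Icc 1 (if k = z then m-1 else m)) with hL
  have hLsub : ∀ v ∈ L, v ∈ grid := by
    intro v hv
    rw [Fintype.mem_piFinset] at hv ⊢
    intro k
    have := hv k
    rcases eq_or_ne k z with rfl | h
    · rw [if_pos rfl] at this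
      simp only [Finset.mem_Icc] at this ⊢
      omega
    · rwa [if_neg h] at this
  have hupd : ∀ v ∈ L, Function.update v z (v z + 1) ∈ grid := by
    intro v hv
    rw [Fintype.mem_piFinset] at hv ⊢
    intro k
    have hvk := hv k
    rcases eq_or_ne k z with rfl | h
    · rw [Function.update_self]
      rw [if_pos rfl] at hvk
      simp only [Finset.mem_Icc] at hvk ⊢
      omega
    · rw [Function.update_of_ne h]
      rwa [if_neg h] at hvk
  set P : (Fin d₀ → ℕ) → ℕ × ℕ := fun v => (ι v, ι (Function.update v z (v z + 1))) with hP
  have hinjP : Set.InjOn P L := by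
    intro v hv w hw hvw
    have hv' := hLsub v (by simpa using hv)
    have hw' := hLsub w (by simpa using hw)
    have h1 : ι v = ι w := congrArg Prod.fst hvw
    have h2 := (hιspec v hv').2
    rw [h1, (hιspec w hw').2] at h2
    exact h2.symm
  refine ⟨L.image P, ?_, ?_, ?_⟩
  · intro p hp
    obtain ⟨v, hv, rfl⟩ := Finset.mem_image.mp hp
    exact Finset.mem_product.mpr ⟨(hιspec v (hLsub v hv)).1,
      (hιspec _ (hupd v hv)).1⟩
  · rw [Finset.card_image_of_injOn hinjP, hL, Fintype.card_piFinset]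
    rw [← Finset.mul_prod_erase Finset.univ _ (Finset.mem_univ z)]
    rw [if_pos rfl, Nat.card_Icc]
    have : ∀ k ∈ Finset.univ.erase z, (Finset.Icc 1 (if k = z then m-1 else m)).card = m := by
      intro k hk
      rw [if_neg (Finset.mem_erase.mp hk).1, Nat.card_Icc]
      omega
    rw [Finset.prod_congr rfl this, Finset.prod_const, Finset.card_erase_of_mem (Finset.mem_univ z),
      Finset.card_univ, Fintype.card_fin]
    congr 1
  · intro p hp
    obtain ⟨v, hv, rfl⟩ := Finset.mem_image.mp hp
    have hv' := hLsub v hv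
    have hw' := hupd v hv
    have hXv := (hιspec v hv').2
    have hXw := (hιspec _ hw').2
    have hcoord : ∀ k : Fin d₀, x (ι v) (k : ℕ) = v k := fun k => congrFun hXv k
    have hcoord' : ∀ k : Fin d₀, x (ι (Function.update v z (v z + 1))) (k : ℕ)
        = Function.update v z (v z + 1) k := fun k => congrFun hXw k
    have hz0 : x (P v).1 0 ≠ x (P v).2 0 := by
      have h1 : x (ι v) 0 = v z := hcoord z
      have h2 : x (ι (Function.update v z (v z + 1))) 0
          = Function.update v z (v z + 1) z := hcoord' z
      rw [Function.update_self] at h2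
      simp only [hP]
      intro hcontra
      omega
    refine ⟨?_, hz0, ?_⟩
    · intro hcontra
      exact hz0 (by rw [show (P v).1 = (P v).2 from hcontra])
    · intro k hk
      have h1 : x (ι v) k = v ⟨k, hk⟩ := hcoord ⟨k, hk⟩
      have h2 : x (ι (Function.update v z (v z + 1))) k
          = Function.update v z (v z + 1) ⟨k, hk⟩ := hcoord' ⟨k, hk⟩
      simp only [hP]
      rcases eq_or_ne (⟨k, hk⟩ : Fin d₀) z with heq | hne
      · rw [heq, Function.update_self] at h2
        rw [heq] at h1
        omega
      · rw [Function.update_of_ne hne] at h2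
        omega

/-- Example 1, identifiability (Condition 5) for the exponential kernel
`K_θ(f,g) = θ₁ e^{−θ₂‖f−g‖}` on the perturbed grid with grid enumeration. -/
theorem perturbedGrid_exponential_identifiability
    {H : Type*} [NormedAddCommGroup H] [InnerProductSpace ℝ H] [CompleteSpace H]
    (e : HilbertBasis ℕ ℝ H)
    (d₀ : ℕ) (hd₀ : 1 ≤ d₀)
    (δ : ℝ) (hδ0 : 0 ≤ δ) (hδ : δ < 1 / 2)
    (ξ : ℕ → ℕ → ℝ) (hξ : ∀ i k, |ξ i k| ≤ 1)
    (s : ℕ → ℝ) (hs0 : ∀ k, d₀ ≤ k → 0 ≤ s k)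
    (hssum : Summable fun k : ℕ => s (d₀ + k) ^ 2)
    -- the grid enumeration property: {x_1, …, x_{m^{d₀}}} = {1, …, m}^{d₀}
    (x : ℕ → ℕ → ℕ)
    (hgrid : ∀ m : ℕ, 1 ≤ m →
      Finset.image (fun i => fun k : Fin d₀ => x i (k : ℕ)) (Finset.range (m ^ d₀))
        = Fintype.piFinset fun _ : Fin d₀ => Finset.Icc 1 m)
    -- the compact parameter set Θ ⊂ (0,∞)² and the true parameter θ₀
    (Θ : Set (ℝ × ℝ)) (hΘcomp : IsCompact Θ)
    (hΘpos : Θ ⊆ Set.Ioi (0 : ℝ) ×ˢ Set.Ioi (0 : ℝ))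
    (θ₀ : ℝ × ℝ) (hθ₀ : θ₀ ∈ Θ) :
    ∀ α > (0 : ℝ), ∃ β > (0 : ℝ), ∀ᶠ n : ℕ in atTop, ∀ θ ∈ Θ, α ≤ dist θ θ₀ →
      β ≤ (1 / (n : ℝ)) * ∑ i ∈ Finset.range n, ∑ j ∈ Finset.range n,
        (θ.1 * Real.exp (-θ.2 *
            ‖perturbedGridInput e d₀ δ ξ s x i - perturbedGridInput e d₀ δ ξ s x j‖)
          - θ₀.1 * Real.exp (-θ₀.2 *
            ‖perturbedGridInput e d₀ δ ξ s x i - perturbedGridInput e d₀ δ ξ s x j‖)) ^ 2 := by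
  intro α hα
  classical
  set T : ℝ := ∑' k : ℕ, s (d₀ + k) ^ 2 with hT
  have hT0 : 0 ≤ T := tsum_nonneg (fun k => sq_nonneg _)
  set c : ℝ := 1 - 2*δ with hc
  set C : ℝ := 2*(d₀ : ℝ) + 2*Real.sqrt T with hC
  have hcpos : 0 < c := by rw [hc]; linarith
  have hcC : c ≤ C := by
    have h1 : (1:ℝ) ≤ (d₀:ℝ) := by exact_mod_cast hd₀
    have h2 : 0 ≤ Real.sqrt T := Real.sqrt_nonneg T
    rw [hc, hC]; linarith
  obtain ⟨β', hβ'pos, hmin⟩ := pgi_exists_beta Θ hΘcomp hΘpos θ₀ hθ₀ α hα c C hcpos hcC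
  set ρ : ℝ := (2:ℝ)^(d₀+1) with hρ
  have hρpos : 0 < ρ := by positivity
  refine ⟨β' / ρ, by positivity, ?_⟩
  filter_upwards [eventually_ge_atTop (2^d₀)] with n hn
  intro θ hθ hdist
  -- basic facts about n
  have hnpos : 0 < n := lt_of_lt_of_le (Nat.pow_pos (by norm_num : 0 < 2) : 0 < 2^d₀) hn
  have hnR : (0:ℝ) < (n:ℝ) := by exact_mod_cast hnpos
  -- choose m
  set m : ℕ := Nat.findGreatest (fun m => m^d₀ ≤ n) n with hm
  have hP2 : (2:ℕ)^d₀ ≤ n := hn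
  have h2n : 2 ≤ n := by
    calc 2 = 2^1 := (pow_one 2).symm
      _ ≤ 2^d₀ := Nat.pow_le_pow_right (by omega) hd₀
      _ ≤ n := hn
  have hm2 : 2 ≤ m := Nat.le_findGreatest h2n hP2
  have hmn : m^d₀ ≤ n := Nat.findGreatest_spec (P := fun m => m^d₀ ≤ n) h2n hP2
  have hn2 : n < (m+1)^d₀ := by
    by_cases hcase : m + 1 ≤ n
    · by_contra hcon
      exact Nat.findGreatest_is_greatest (Nat.lt_succ_self m) hcase (Nat.le_of_not_lt hcon)
    · have h1 : n ≤ m := by omega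
      calc n ≤ m := h1
        _ < m + 1 := Nat.lt_succ_self m
        _ ≤ (m+1)^d₀ := Nat.le_self_pow (by omega) _
  -- counting
  obtain ⟨S, hSsub, hScard, hSprop⟩ := pgi_counting_lemma d₀ hd₀ x hgrid m hm2
  set N : ℕ := (m-1) * m^(d₀-1) with hN
  have hNn : N ≤ n := by
    calc N = (m-1) * m^(d₀-1) := rfl
      _ ≤ m * m^(d₀-1) := Nat.mul_le_mul_right _ (by omega)
      _ = m^d₀ := by
          rw [← pow_succ']
          congr 1
          omega
      _ ≤ n := hmn
  have hcount : n < 2^(d₀+1) * N := by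
    have h1 : n < (m+1)^d₀ := hn2
    have h2 : (m+1)^d₀ ≤ (2*m)^d₀ := Nat.pow_le_pow_left (by omega) _
    have h3 : (2*m)^d₀ = 2^d₀ * m^d₀ := by rw [mul_pow]
    have h4 : m^d₀ = m * m^(d₀-1) := by
      rw [← pow_succ']
      congr 1
      omega
    have h5 : m * m^(d₀-1) ≤ (2*(m-1)) * m^(d₀-1) := Nat.mul_le_mul_right _ (by omega)
    calc n < (m+1)^d₀ := h1
      _ ≤ 2^d₀ * m^d₀ := h3 ▸ h2
      _ = 2^d₀ * (m * m^(d₀-1)) := by rw [h4]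
      _ ≤ 2^d₀ * ((2*(m-1)) * m^(d₀-1)) := Nat.mul_le_mul_left _ h5
      _ = 2^(d₀+1) * N := by rw [hN]; ring
  -- abbreviations
  set v : ℕ → H := perturbedGridInput e d₀ δ ξ s x with hv
  set f : ℕ × ℕ → ℝ := fun p =>
    (θ.1 * Real.exp (-θ.2 * ‖v p.1 - v p.2‖) - θ₀.1 * Real.exp (-θ₀.2 * ‖v p.1 - v p.2‖)) ^ 2
    with hf
  have hsum_eq : ∑ i ∈ Finset.range n, ∑ j ∈ Finset.range n,
      (θ.1 * Real.exp (-θ.2 * ‖v i - v j‖) - θ₀.1 * Real.exp (-θ₀.2 * ‖v i - v j‖)) ^ 2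
      = ∑ p ∈ Finset.range n ×ˢ Finset.range n, f p := by
    rw [Finset.sum_product]
  set a : ℝ := (θ.1 - θ₀.1)^2 with ha
  -- diagonal
  set D : Finset (ℕ × ℕ) := (Finset.range n).image (fun i => (i, i)) with hD
  have hDsub : D ⊆ Finset.range n ×ˢ Finset.range n := by
    intro p hp
    obtain ⟨i, hi, rfl⟩ := Finset.mem_image.mp hp
    exact Finset.mem_product.mpr ⟨hi, hi⟩
  have hDsum : ∑ p ∈ D, f p = n * a := by
    rw [hD, Finset.sum_image (fun i _ j _ h => (Prod.mk.injEq i i j j).mp h |>.1)]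
    have : ∀ i ∈ Finset.range n, f (i, i) = a := by
      intro i _
      simp only [hf, ha, sub_self, norm_zero, mul_zero, Real.exp_zero, mul_one]
    rw [Finset.sum_congr rfl this, Finset.sum_const, Finset.card_range, nsmul_eq_mul]
  -- S facts
  have hSsub' : S ⊆ Finset.range n ×ˢ Finset.range n := by
    intro p hp
    have h := Finset.mem_product.mp (hSsub hp)
    rw [Finset.mem_product]
    exact ⟨Finset.mem_range.mpr (lt_of_lt_of_le (Finset.mem_range.mp h.1) hmn),
      Finset.mem_range.mpr (lt_of_lt_of_le (Finset.mem_range.mp h.2) hmn)⟩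
  have hdisj : Disjoint D S := by
    rw [Finset.disjoint_left]
    intro p hpD hpS
    obtain ⟨i, _, rfl⟩ := Finset.mem_image.mp hpD
    exact (hSprop _ hpS).1 rfl
  have hScard' : S.card = N := hScard
  -- bound on S terms
  have hSterm : ∀ p ∈ S, β' - a ≤ f p := by
    intro p hp
    obtain ⟨hne, hne0, hadj⟩ := hSprop p hp
    have hg1 : c ≤ ‖v p.1 - v p.2‖ :=
      pgi_lower e d₀ δ hδ0 hδ ξ hξ s hssum x hd₀ hne0
    have hg2 : ‖v p.1 - v p.2‖ ≤ C := by
      refine pgi_upper e d₀ δ hδ0 hδ ξ hξ s hssum x (fun k hk => ?_)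
      have h := hadj k hk
      rw [abs_le]
      have h1 : (x p.1 k : ℝ) ≤ (x p.2 k : ℝ) + 1 := by exact_mod_cast h.1
      have h2 : (x p.2 k : ℝ) ≤ (x p.1 k : ℝ) + 1 := by exact_mod_cast h.2
      constructor <;> linarith
    have := hmin θ hθ hdist ‖v p.1 - v p.2‖ ⟨hg1, hg2⟩
    simp only [hf]
    linarith
  -- putting it together
  have htotal : (N : ℝ) * β' ≤ ∑ p ∈ Finset.range n ×ˢ Finset.range n, f p
      ∨ (n : ℝ) * β' ≤ ∑ p ∈ Finset.range n ×ˢ Finset.range n, f p := by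
    have hge : ∑ p ∈ D ∪ S, f p ≤ ∑ p ∈ Finset.range n ×ˢ Finset.range n, f p := by
      refine Finset.sum_le_sum_of_subset_of_nonneg ?_ (fun p _ _ => sq_nonneg _)
      exact Finset.union_subset hDsub hSsub'
    rw [Finset.sum_union hdisj, hDsum] at hge
    rcases le_or_gt β' a with hcase | hcase
    · right
      have hSnonneg : (0:ℝ) ≤ ∑ p ∈ S, f p := Finset.sum_nonneg (fun p _ => sq_nonneg _)
      have hna : (n:ℝ)*β' ≤ (n:ℝ)*a := mul_le_mul_of_nonneg_left hcase hnR.le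
      linarith
    · left
      have hS : (S.card : ℝ) * (β' - a) ≤ ∑ p ∈ S, f p := by
        calc (S.card : ℝ) * (β' - a) = ∑ _p ∈ S, (β' - a) := by
              rw [Finset.sum_const, nsmul_eq_mul]
          _ ≤ ∑ p ∈ S, f p := Finset.sum_le_sum hSterm
      rw [hScard'] at hS
      have hNn' : (N:ℝ) ≤ (n:ℝ) := by exact_mod_cast hNn
      have ha0 : 0 ≤ a := sq_nonneg _
      have hNa : (N:ℝ)*a ≤ (n:ℝ)*a := mul_le_mul_of_nonneg_right hNn' ha0
      have hid : (N:ℝ)*β' = (N:ℝ)*a + (N:ℝ)*(β'-a) := by ring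
      linarith
  rw [hsum_eq]
  have hβ'0 : 0 ≤ β' := hβ'pos.le
  have hkey : (n : ℝ) / ρ * β' ≤ ∑ p ∈ Finset.range n ×ˢ Finset.range n, f p := by
    rcases htotal with h | h
    · refine le_trans ?_ h
      have hcount' : (n : ℝ) ≤ ρ * N := by
        have h2 : (n:ℝ) < (2:ℝ)^(d₀+1) * (N:ℝ) := by exact_mod_cast hcount
        rw [hρ]; linarith
      have hdivN : (n : ℝ) / ρ ≤ (N:ℝ) := by
        rw [div_le_iff₀ hρpos]; linarith [hcount']
      exact mul_le_mul_of_nonneg_right hdivN hβ'0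
    · refine le_trans ?_ h
      have hρ1 : (1:ℝ) ≤ ρ := by
        calc (1:ℝ) = 1^(d₀+1) := (one_pow _).symm
          _ ≤ 2^(d₀+1) := by gcongr; norm_num
      have hdivn : (n : ℝ) / ρ ≤ (n:ℝ) := div_le_self hnR.le hρ1
      exact mul_le_mul_of_nonneg_right hdivn hβ'0
  calc β' / ρ = (1/(n:ℝ)) * ((n:ℝ)/ρ * β') := by
        field_simp
    _ ≤ (1/(n:ℝ)) * ∑ p ∈ Finset.range n ×ˢ Finset.range n, f p :=
        mul_le_mul_of_nonneg_left hkey (by positivity)
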